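/- Let R be a commutative ring with identity and let a, b ∈ R. The ring extension Δ(R)[(a,b)] ⊂ R × R is a minimal ring extension (i.e., Δ(R)[(a,b)] is a proper subring of R × R with no subring strictly between them) if and only if the principal ideal (a - b)R is a maximal ideal of R. -/

import Mathlib

/-- The subring of `R × R` of pairs whose difference lies in the ideal `I`. -/
def diagIdealSubring {R : Type*} [CommRing R] (I : Ideal R) : Subring (R × R) where
  carrier := {p | p.1 - p.2 ∈ I}
  zero_mem' := by simp
  one_mem' := by simp
  add_mem' := by
    intro p q hp hq
    show (p.1 + q.1) - (p.2 + q.2) ∈ I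
    convert I.add_mem hp hq using 1
    ring
  neg_mem' := by
    intro p hp
    show (-p.1) - (-p.2) ∈ I
    convert I.neg_mem hp using 1
    ring
  mul_mem' := by
    intro p q hp hq
    show (p.1 * q.1) - (p.2 * q.2) ∈ I
    convert I.add_mem (I.mul_mem_left p.1 hq) (I.mul_mem_left q.2 hp) using 1
    ring

lemma mem_diagIdealSubring {R : Type*} [CommRing R] {I : Ideal R} {p : R × R} :
    p ∈ diagIdealSubring I ↔ p.1 - p.2 ∈ I := Iff.rfl

lemma closure_eq_diagIdealSubring {R : Type*} [CommRing R] (a b : R) :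
    Subring.closure (Set.range (fun r : R => (r, r)) ∪ {(a, b)}) =
      diagIdealSubring (Ideal.span {a - b}) := by
  apply le_antisymm
  · rw [Subring.closure_le]
    rintro p (⟨r, rfl⟩ | rfl)
    · simp [mem_diagIdealSubring]
    · exact Ideal.subset_span rfl
  · rintro ⟨x, y⟩ hxy
    rw [mem_diagIdealSubring] at hxy
    obtain ⟨s, hs⟩ := Ideal.mem_span_singleton'.mp hxy
    have hs' : s * (a - b) = x - y := hs
    have hd : ∀ r : R, ((r, r) : R × R) ∈
        Subring.closure (Set.range (fun r : R => (r, r)) ∪ {(a, b)}) := fun r =>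
      Subring.subset_closure (Or.inl ⟨r, rfl⟩)
    have hab : ((a, b) : R × R) ∈
        Subring.closure (Set.range (fun r : R => (r, r)) ∪ {(a, b)}) :=
      Subring.subset_closure (Or.inr rfl)
    have key : ((x, y) : R × R) = (y - s * b, y - s * b) + (s, s) * (a, b) := by
      ext
      · show x = y - s * b + s * a
        linear_combination -hs'
      · show y = y - s * b + s * b
        ring
    rw [key]
    exact add_mem (hd _) (mul_mem (hd _) hab)

theorem stmt_1 (R : Type*) [CommRing R] (a b : R) :
    IsCoatom (Subring.closure (Set.range (fun r : R => (r, r)) ∪ {(a, b)})) ↔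
      (Ideal.span {a - b}).IsMaximal := by
  rw [closure_eq_diagIdealSubring, Ideal.isMaximal_def]
  set I := Ideal.span {a - b} with hI
  constructor
  · rintro ⟨hne, hmax⟩
    constructor
    · intro h
      apply hne
      rw [h]
      ext p
      simp [mem_diagIdealSubring, Submodule.mem_top]
    · intro J hJ
      have hlt : diagIdealSubring I < diagIdealSubring J := by
        rw [SetLike.lt_iff_le_and_exists]
        refine ⟨fun p hp => hJ.le hp, ?_⟩
        obtain ⟨d, hdJ, hdI⟩ := SetLike.exists_of_lt hJ
        exact ⟨(d, 0), by simpa [mem_diagIdealSubring] using hdJ,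
          by simpa [mem_diagIdealSubring] using hdI⟩
      have h1 : ((1, 0) : R × R) ∈ diagIdealSubring J :=
        (hmax _ hlt) ▸ Subring.mem_top _
      rw [Ideal.eq_top_iff_one]
      simpa [mem_diagIdealSubring] using h1
  · rintro ⟨hne, hmax⟩
    constructor
    · intro h
      apply hne
      rw [Ideal.eq_top_iff_one]
      have h1 : ((1, 0) : R × R) ∈ diagIdealSubring I := h ▸ Subring.mem_top _
      simpa [mem_diagIdealSubring] using h1
    · intro T hT
      obtain ⟨⟨x, y⟩, hxT, hxS⟩ := SetLike.exists_of_lt hT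
      have hdiag : ∀ r : R, ((r, r) : R × R) ∈ T := fun r =>
        hT.le (by simp [mem_diagIdealSubring])
      set J : Ideal R := {
        carrier := {d | ((d, 0) : R × R) ∈ T}
        zero_mem' := by exact T.zero_mem
        add_mem' := fun {p q} hp hq => by
          simpa using T.add_mem hp hq
        smul_mem' := fun c x hx => by
          have := T.mul_mem (hdiag c) hx
          simpa using this } with hJdef
      have hmemJ : ∀ d : R, d ∈ J ↔ ((d, 0) : R × R) ∈ T := fun d => Iff.rfl
      have hIJ : I < J := by
        rw [SetLike.lt_iff_le_and_exists]
        refine ⟨fun d hd => hT.le (by simpa [mem_diagIdealSubring] using hd), ?_⟩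
        refine ⟨x - y, ?_, ?_⟩
        · rw [hmemJ]
          have := T.sub_mem hxT (hdiag y)
          simpa [Prod.mk_sub_mk] using this
        · intro hc
          exact hxS (by simpa [mem_diagIdealSubring] using hc)
      have hJtop := hmax _ hIJ
      have h10 : ((1, 0) : R × R) ∈ T := by
        have : (1 : R) ∈ J := hJtop ▸ Submodule.mem_top
        exact this
      rw [eq_top_iff]
      rintro ⟨u, v⟩ -
      have hu : ((u, 0) : R × R) ∈ T := by simpa using T.mul_mem (hdiag u) h10
      have hv : ((0, v) : R × R) ∈ T := by
        have := T.sub_mem (hdiag v) hu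
        have hv0 : ((v, 0) : R × R) ∈ T := by simpa using T.mul_mem (hdiag v) h10
        simpa [Prod.mk_sub_mk] using T.sub_mem (hdiag v) hv0
      simpa using T.add_mem hu hv
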